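/- In the group algebra Q[S_{n+1}], the element x_{n-1} (sum of all w with w(1) < ... < w(n)) satisfies the polynomial identity x_{n-1}^(falling (n+1)) = x_{n-1}^(falling n), i.e., prod_{i=0}^{n} (x_{n-1} - i) = prod_{i=0}^{n-1} (x_{n-1} - i). -/

import Mathlib

/-- In the group algebra `ℚ[S_N]` (permutations of `{0, 1, ..., N-1}`, corresponding to
`{1, ..., N}` in one-based indexing), `xA N j` is the sum of all permutations `w` with
`w 0 < w 1 < ... < w j`, i.e. the minimal-length left coset representatives of the
parabolic subgroup generated by the adjacent transpositions `s_1, ..., s_j`. -/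
noncomputable def xA (N j : ℕ) : MonoidAlgebra ℚ (Equiv.Perm (Fin N)) :=
  ∑ w ∈ Finset.univ.filter
      (fun w : Equiv.Perm (Fin N) => ∀ a b : Fin N, a < b → (b : ℕ) ≤ j → w a < w b),
    MonoidAlgebra.single w 1

open Finset MonoidAlgebra

theorem Equiv.Perm.apply_inv_self {α : Type*} (f : Equiv.Perm α) (x : α) : f (f⁻¹ x) = x :=
  Equiv.apply_symm_apply f x

theorem Equiv.Perm.inv_apply_self {α : Type*} (f : Equiv.Perm α) (x : α) : f⁻¹ (f x) = x :=
  Equiv.symm_apply_apply f x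

def P (N j : ℕ) (w : Equiv.Perm (Fin N)) : Prop :=
  ∀ a b : Fin N, a < b → (b : ℕ) ≤ j → w a < w b

instance (N j : ℕ) : DecidablePred (P N j) := fun _ => by unfold P; infer_instance

lemma xA_eq (N j : ℕ) : xA N j = ∑ w ∈ Finset.univ.filter (P N j), MonoidAlgebra.single w 1 := rfl

lemma P_mono {N j j' : ℕ} (h : j' ≤ j) {w : Equiv.Perm (Fin N)} (hw : P N j w) : P N j' w :=
  fun a b hab hb => hw a b hab (hb.trans h)

variable {n : ℕ}
lemma A_mono {v : Equiv.Perm (Fin (n+1))} (hv : P (n+1) (n-1) v)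
    {a b : Fin (n+1)} (hab : a < b) (hb : b ≠ Fin.last n) : v a < v b := by
  apply hv a b hab
  have h1 := b.isLt
  have h2 : (b : ℕ) ≠ n := fun h => hb (Fin.ext (by simp [h]))
  have h3 : (a : ℕ) < (b : ℕ) := hab
  omega

lemma factA {v : Equiv.Perm (Fin (n+1))} (hv : P (n+1) (n-1) v)
    {y z : Fin (n+1)} (hy : y ≠ v (Fin.last n)) (hz : z ≠ v (Fin.last n)) :
    y < z ↔ v⁻¹ y < v⁻¹ z := by
  have hyl : v⁻¹ y ≠ Fin.last n := fun h => hy (by rw [← h]; simp)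
  have hzl : v⁻¹ z ≠ Fin.last n := fun h => hz (by rw [← h]; simp)
  constructor
  · intro hyz
    rcases lt_trichotomy (v⁻¹ y) (v⁻¹ z) with h | h | h
    · exact h
    · exact absurd (v⁻¹.injective h) (by intro hc; rw [hc] at hyz; exact lt_irrefl _ hyz)
    · have := A_mono hv h hyl
      simp only [Equiv.Perm.apply_inv_self] at this
      exact absurd hyz (not_lt.mpr this.le)
  · intro h
    have := A_mono hv h hzl
    simpa using this

lemma mem_iff {j : ℕ} (hj : j ≤ n) (w : Equiv.Perm (Fin (n+1)))
    {v : Equiv.Perm (Fin (n+1))} (hv : P (n+1) (n-1) v) :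
    P (n+1) j (v⁻¹ * w) ↔
      ((j < (w⁻¹ (v (Fin.last n)) : ℕ) ∧ P (n+1) j w) ∨
       ((w⁻¹ (v (Fin.last n)) : ℕ) = j ∧ P (n+1) (j-1) w)) := by
  set k := v (Fin.last n) with hk
  set p := w⁻¹ k with hp
  have hwp : w p = k := w.apply_inv_self k
  -- position ≠ p implies value ≠ k
  have hne : ∀ a : Fin (n+1), a ≠ p → w a ≠ k := by
    intro a ha hc
    exact ha (by rw [← hwp] at hc; exact w.injective hc)
  constructor
  · intro h
    have hjp : j ≤ (p : ℕ) := by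
      by_contra hcon
      push_neg at hcon
      have hplt : (p : ℕ) + 1 < n + 1 := by omega
      have hlt : p < (⟨(p : ℕ) + 1, hplt⟩ : Fin (n+1)) := by
        rw [Fin.lt_def]; simp
      have h2 := h p ⟨(p : ℕ) + 1, hplt⟩ hlt (by simpa using hcon)
      rw [Equiv.Perm.mul_apply, Equiv.Perm.mul_apply, hwp, Equiv.Perm.inv_apply_self] at h2
      exact absurd h2 (not_lt.mpr (Fin.le_last _))
    rcases eq_or_lt_of_le hjp with heq | hlt
    · right
      refine ⟨heq.symm, ?_⟩
      intro a b hab hb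
      have hbp : b ≠ p := by
        intro hc; rw [hc] at hb
        have : (a : ℕ) < (b : ℕ) := hab
        omega
      have hap : a ≠ p := by
        intro hc
        have h1 : (a : ℕ) < (b : ℕ) := hab
        have h2 : (a : ℕ) = (p : ℕ) := by rw [hc]
        omega
      have h2 := h a b hab (by omega)
      rw [Equiv.Perm.mul_apply, Equiv.Perm.mul_apply] at h2
      exact (factA hv (hne a hap) (hne b hbp)).mpr h2
    · left
      refine ⟨hlt, ?_⟩
      intro a b hab hb
      have hbp : b ≠ p := fun hc => by rw [hc] at hb; omega
      have hap : a ≠ p := fun hc => by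
        have : (a : ℕ) < (b : ℕ) := hab
        rw [hc] at this; omega
      have h2 := h a b hab hb
      rw [Equiv.Perm.mul_apply, Equiv.Perm.mul_apply] at h2
      exact (factA hv (hne a hap) (hne b hbp)).mpr h2
  · rintro (⟨hpj, hw⟩ | ⟨hpj, hw⟩) <;> intro a b hab hb <;>
      rw [Equiv.Perm.mul_apply, Equiv.Perm.mul_apply]
    · have hbp : b ≠ p := fun hc => by rw [hc] at hb; omega
      have hap : a ≠ p := fun hc => by
        have : (a : ℕ) < (b : ℕ) := hab
        rw [hc] at this; omega
      exact (factA hv (hne a hap) (hne b hbp)).mp (hw a b hab hb)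
    · by_cases hbp : b = p
      · have hap : a ≠ p := fun hc => by
          have : (a : ℕ) < (b : ℕ) := hab
          rw [hc, hbp] at this; omega
        rw [hbp, hwp]
        have h1 : v⁻¹ k = Fin.last n := by rw [hk]; exact v.inv_apply_self _
        rw [h1]
        exact lt_of_le_of_ne (Fin.le_last _) (fun hc => hne a hap (by
          have : w a = v (Fin.last n) := by rw [← h1] at hc; exact v⁻¹.injective hc
          exact this))
      · have hap : a ≠ p := fun hc => by
          have h1 : (a : ℕ) < (b : ℕ) := hab
          have h2 : (b : ℕ) ≠ (p : ℕ) := fun hc2 => hbp (Fin.ext hc2)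
          rw [hc] at h1; omega
        have hbj : (b : ℕ) ≤ j - 1 := by
          have h2 : (b : ℕ) ≠ (p : ℕ) := fun hc2 => hbp (Fin.ext hc2)
          omega
        exact (factA hv (hne a hap) (hne b hbp)).mp (hw a b hab hbj)

def cf (n : ℕ) (k : Fin (n+1)) (v : Fin (n+1)) : Fin (n+1) :=
  if h : (v : ℕ) = n then k
  else if (v : ℕ) < (k : ℕ) then v
  else ⟨(v : ℕ) + 1, by have := v.isLt; omega⟩

def cg (n : ℕ) (k : Fin (n+1)) (v : Fin (n+1)) : Fin (n+1) :=
  if (v : ℕ) = (k : ℕ) then ⟨n, Nat.lt_succ_self n⟩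
  else if (v : ℕ) < (k : ℕ) then v
  else ⟨(v : ℕ) - 1, by have := v.isLt; omega⟩

lemma cf_val (k v : Fin (n+1)) :
    (cf n k v : ℕ) = if (v : ℕ) = n then (k : ℕ) else if (v : ℕ) < (k : ℕ) then (v : ℕ) else (v : ℕ) + 1 := by
  unfold cf; split_ifs <;> rfl

lemma cg_val (k v : Fin (n+1)) :
    (cg n k v : ℕ) = if (v : ℕ) = (k : ℕ) then n else if (v : ℕ) < (k : ℕ) then (v : ℕ) else (v : ℕ) - 1 := by
  unfold cg; split_ifs <;> rfl

lemma cgf (n : ℕ) (k v : Fin (n+1)) : cg n k (cf n k v) = v := by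
  have hv := v.isLt; have hk := k.isLt
  apply Fin.ext
  rw [cg_val, cf_val]
  split_ifs <;> omega

lemma cfg (n : ℕ) (k v : Fin (n+1)) : cf n k (cg n k v) = v := by
  have hv := v.isLt; have hk := k.isLt
  apply Fin.ext
  rw [cf_val, cg_val]
  split_ifs <;> omega

def cperm (n : ℕ) (k : Fin (n+1)) : Equiv.Perm (Fin (n+1)) :=
  ⟨cf n k, cg n k, cgf n k, cfg n k⟩

lemma cperm_last (k : Fin (n+1)) : cperm n k (Fin.last n) = k := by
  show cf n k (Fin.last n) = k
  unfold cf
  simp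

lemma cperm_mem (k : Fin (n+1)) : P (n+1) (n-1) (cperm n k) := by
  intro a b hab hb
  have ha' := a.isLt; have hb' := b.isLt; have hk := k.isLt
  have hab' : (a : ℕ) < (b : ℕ) := hab
  show cf n k a < cf n k b
  rw [Fin.lt_def, cf_val, cf_val]
  split_ifs <;> omega

lemma eval_last_inj {v v' : Equiv.Perm (Fin (n+1))}
    (hv : P (n+1) (n-1) v) (hv' : P (n+1) (n-1) v')
    (h : v (Fin.last n) = v' (Fin.last n)) : v = v' := by
  have key : ∀ m : ℕ, ∀ i : Fin (n+1), (i : ℕ) = m → v i = v' i := by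
    intro m
    induction m using Nat.strong_induction_on with
    | _ m IH =>
      intro i him
      by_cases hi : i = Fin.last n
      · subst hi; exact h
      · obtain ⟨a, hva⟩ : ∃ a, v a = v' i := ⟨v⁻¹ (v' i), v.apply_inv_self _⟩
        have hal : a ≠ Fin.last n := by
          intro hc
          rw [hc] at hva
          rw [hva] at h
          exact hi (v'.injective h)
        rcases lt_trichotomy a i with hlt | heq | hgt
        · exfalso
          have h1 := IH (a : ℕ) (by rw [← him]; exact hlt) a rfl
          rw [h1] at hva
          exact absurd (v'.injective hva) (ne_of_lt hlt)
        · rwa [heq] at hva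
        · obtain ⟨b, hvb⟩ : ∃ b, v' b = v i := ⟨v'⁻¹ (v i), v'.apply_inv_self _⟩
          have hbl : b ≠ Fin.last n := by
            intro hc
            rw [hc] at hvb
            rw [hvb] at h
            exact hi (v.injective h).symm
          rcases lt_trichotomy b i with hlt' | heq' | hgt'
          · exfalso
            have h1 := IH (b : ℕ) (by rw [← him]; exact hlt') b rfl
            rw [← h1] at hvb
            exact absurd (v.injective hvb) (ne_of_lt hlt')
          · rw [heq'] at hvb; exact hvb.symm
          · exfalso
            have h1 : v' i < v' b := A_mono hv' hgt' hbl
            have h2 : v i < v a := A_mono hv hgt hal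
            rw [hvb] at h1
            rw [hva] at h2
            exact absurd (h1.trans h2) (lt_irrefl _)
  exact Equiv.ext fun i => key (i : ℕ) i rfl

lemma count_eq {j : ℕ} (hj : j ≤ n) (w : Equiv.Perm (Fin (n+1))) :
    ((univ.filter (P (n+1) (n-1))).filter (fun v => P (n+1) j (v⁻¹ * w))).card
      = (if P (n+1) (j-1) w then 1 else 0) + (n - j) * (if P (n+1) j w then 1 else 0) := by
  have h1 : (univ.filter (P (n+1) (n-1))).filter (fun v => P (n+1) j (v⁻¹ * w))
      = (univ.filter (P (n+1) (n-1))).filter (fun v =>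
          (j < (w⁻¹ (v (Fin.last n)) : ℕ) ∧ P (n+1) j w) ∨
          ((w⁻¹ (v (Fin.last n)) : ℕ) = j ∧ P (n+1) (j-1) w)) := by
    apply filter_congr
    intro v hvmem
    rw [mem_filter] at hvmem
    exact mem_iff hj w hvmem.2
  rw [h1]
  have h2 : ((univ.filter (P (n+1) (n-1))).filter (fun v =>
          (j < (w⁻¹ (v (Fin.last n)) : ℕ) ∧ P (n+1) j w) ∨
          ((w⁻¹ (v (Fin.last n)) : ℕ) = j ∧ P (n+1) (j-1) w))).card
      = (univ.filter (fun k : Fin (n+1) =>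
          (j < (w⁻¹ k : ℕ) ∧ P (n+1) j w) ∨ ((w⁻¹ k : ℕ) = j ∧ P (n+1) (j-1) w))).card := by
    apply Finset.card_bij (fun v _ => v (Fin.last n))
    · intro v hv
      rw [mem_filter] at hv ⊢
      exact ⟨mem_univ _, hv.2⟩
    · intro v1 h1' v2 h2' heq
      rw [mem_filter, mem_filter] at h1' h2'
      exact eval_last_inj h1'.1.2 h2'.1.2 heq
    · intro k hk
      rw [mem_filter] at hk
      refine ⟨cperm n k, ?_, ?_⟩
      · rw [mem_filter, mem_filter]
        refine ⟨⟨mem_univ _, cperm_mem k⟩, ?_⟩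
        rw [cperm_last]
        exact hk.2
      · exact cperm_last k
  rw [h2]
  have h3 : (univ.filter (fun k : Fin (n+1) =>
          (j < (w⁻¹ k : ℕ) ∧ P (n+1) j w) ∨ ((w⁻¹ k : ℕ) = j ∧ P (n+1) (j-1) w))).card
      = (univ.filter (fun p : Fin (n+1) =>
          (j < (p : ℕ) ∧ P (n+1) j w) ∨ ((p : ℕ) = j ∧ P (n+1) (j-1) w))).card := by
    apply Finset.card_bij (fun k _ => w⁻¹ k)
    · intro k hk
      rw [mem_filter] at hk ⊢
      exact ⟨mem_univ _, hk.2⟩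
    · intro k1 _ k2 _ heq
      exact w⁻¹.injective heq
    · intro p hp
      rw [mem_filter] at hp
      refine ⟨w p, ?_, ?_⟩
      · rw [mem_filter, Equiv.Perm.inv_apply_self]
        exact ⟨mem_univ _, hp.2⟩
      · exact Equiv.Perm.inv_apply_self w p
  rw [h3]
  by_cases hPj : P (n+1) j w
  · have hPj' : P (n+1) (j-1) w := P_mono (Nat.sub_le j 1) hPj
    simp only [hPj, hPj', and_true, if_pos]
    have : (univ.filter (fun p : Fin (n+1) => j < (p : ℕ) ∨ (p : ℕ) = j))
        = Finset.Ici (⟨j, by omega⟩ : Fin (n+1)) := by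
      ext p
      simp only [mem_filter, mem_univ, true_and, Finset.mem_Ici]
      rw [Fin.le_def]
      simp only [Fin.val_mk]
      omega
    rw [this, Fin.card_Ici]
    simp only [Fin.val_mk]
    omega
  · by_cases hPj' : P (n+1) (j-1) w
    · have hflt : (univ.filter (fun p : Fin (n+1) =>
          (j < (p : ℕ) ∧ P (n+1) j w) ∨ ((p : ℕ) = j ∧ P (n+1) (j-1) w)))
          = {(⟨j, by omega⟩ : Fin (n+1))} := by
        ext p
        simp only [mem_filter, mem_univ, true_and, mem_singleton, Fin.ext_iff, Fin.val_mk,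
          hPj, hPj', and_true, and_false, false_or]
      rw [hflt, card_singleton, if_pos hPj', if_neg hPj]
      omega
    · have hflt : (univ.filter (fun p : Fin (n+1) =>
          (j < (p : ℕ) ∧ P (n+1) j w) ∨ ((p : ℕ) = j ∧ P (n+1) (j-1) w))) = ∅ := by
        ext p
        simp only [mem_filter, mem_univ, true_and, notMem_empty, iff_false,
          hPj, hPj', and_false, or_self, not_false_eq_true]
      rw [hflt, card_empty, if_neg hPj, if_neg hPj']
      omega

lemma mul_key {j : ℕ} (hj : j ≤ n) :
    xA (n+1) (n-1) * xA (n+1) j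
      = xA (n+1) (j-1) + ((n - j : ℕ) : ℚ) • xA (n+1) j := by
  rw [xA_eq (n+1) (n-1), xA_eq (n+1) j, xA_eq (n+1) (j-1)]
  rw [Finset.sum_mul_sum]
  have step1 : ∀ v ∈ univ.filter (P (n+1) (n-1)),
      (∑ u ∈ univ.filter (P (n+1) j),
        (MonoidAlgebra.single v 1 : MonoidAlgebra ℚ (Equiv.Perm (Fin (n+1)))) * MonoidAlgebra.single u 1)
      = ∑ w ∈ univ.filter (fun w => P (n+1) j (v⁻¹ * w)), MonoidAlgebra.single w 1 := by
    intro v _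
    apply Finset.sum_equiv (Equiv.mulLeft v)
    · intro u
      simp only [mem_filter, mem_univ, true_and, Equiv.coe_mulLeft]
      rw [inv_mul_cancel_left]
    · intro u _
      rw [MonoidAlgebra.single_mul_single, one_mul, Equiv.coe_mulLeft]
  rw [Finset.sum_congr rfl step1]
  have step2 : ∀ v ∈ univ.filter (P (n+1) (n-1)),
      (∑ w ∈ univ.filter (fun w => P (n+1) j (v⁻¹ * w)), (MonoidAlgebra.single w 1 : MonoidAlgebra ℚ (Equiv.Perm (Fin (n+1)))))
      = ∑ w ∈ univ, if P (n+1) j (v⁻¹ * w) then MonoidAlgebra.single w 1 else 0 := by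
    intro v _
    rw [Finset.sum_filter]
  rw [Finset.sum_congr rfl step2, Finset.sum_comm]
  have step3 : ∀ w ∈ (univ : Finset (Equiv.Perm (Fin (n+1)))),
      (∑ v ∈ univ.filter (P (n+1) (n-1)), if P (n+1) j (v⁻¹ * w) then (MonoidAlgebra.single w 1 : MonoidAlgebra ℚ (Equiv.Perm (Fin (n+1)))) else 0)
      = ((if P (n+1) (j-1) w then 1 else 0) + (n - j) * (if P (n+1) j w then 1 else 0)) •
          (MonoidAlgebra.single w 1 : MonoidAlgebra ℚ (Equiv.Perm (Fin (n+1)))) := by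
    intro w _
    rw [Finset.sum_ite, Finset.sum_const, Finset.sum_const_zero, add_zero]
    rw [count_eq hj w]
  rw [Finset.sum_congr rfl step3]
  have step4 : ∀ w ∈ (univ : Finset (Equiv.Perm (Fin (n+1)))),
      ((if P (n+1) (j-1) w then 1 else 0) + (n - j) * (if P (n+1) j w then 1 else 0)) •
          (MonoidAlgebra.single w 1 : MonoidAlgebra ℚ (Equiv.Perm (Fin (n+1))))
      = (if P (n+1) (j-1) w then MonoidAlgebra.single w 1 else 0)
        + (n - j) • (if P (n+1) j w then (MonoidAlgebra.single w 1 : MonoidAlgebra ℚ (Equiv.Perm (Fin (n+1)))) else 0) := by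
    intro w _
    rw [add_nsmul, mul_smul]
    congr 1
    · split_ifs <;> simp
    · congr 1
      split_ifs <;> simp
  rw [Finset.sum_congr rfl step4, Finset.sum_add_distrib]
  congr 1
  · rw [← Finset.sum_filter]
  · rw [← Finset.smul_sum, ← Finset.sum_filter, ← xA_eq]
    rw [Nat.cast_smul_eq_nsmul]

lemma xA_n_eq_one : xA (n+1) n = 1 := by
  rw [xA_eq]
  have hle : ∀ w : Equiv.Perm (Fin (n+1)), (∀ a b : Fin (n+1), a < b → w a < w b) →
      ∀ i : Fin (n+1), (i : ℕ) ≤ (w i : ℕ) := by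
    intro w hsm i
    induction i using Fin.induction with
    | zero => exact Nat.zero_le _
    | succ i IH =>
      have h1 := hsm i.castSucc i.succ (Fin.castSucc_lt_succ (i := i))
      have h2 : (w i.castSucc : ℕ) < (w i.succ : ℕ) := h1
      have h3 : (i.castSucc : ℕ) = (i : ℕ) := rfl
      have h4 : (i.succ : ℕ) = (i : ℕ) + 1 := rfl
      omega
  have hflt : univ.filter (P (n+1) n) = {1} := by
    ext w
    simp only [mem_filter, mem_univ, true_and, mem_singleton]
    constructor
    · intro hw
      have hsm : ∀ a b : Fin (n+1), a < b → w a < w b := by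
        intro a b hab
        exact hw a b hab (by have := b.isLt; omega)
      have hsm' : ∀ a b : Fin (n+1), a < b → w⁻¹ a < w⁻¹ b := by
        intro a b hab
        rcases lt_trichotomy (w⁻¹ a) (w⁻¹ b) with h | h | h
        · exact h
        · exact absurd (w⁻¹.injective h) (by intro hc; rw [hc] at hab; exact lt_irrefl _ hab)
        · have := hsm _ _ h
          simp only [Equiv.Perm.apply_inv_self] at this
          exact absurd (hab.trans this) (lt_irrefl _)
      have h1 := hle w hsm
      have h2 := hle w⁻¹ hsm'
      apply Equiv.ext
      intro i
      have h3 := h1 i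
      have h4 := h2 (w i)
      rw [Equiv.Perm.inv_apply_self] at h4
      have : (w i : ℕ) = (i : ℕ) := le_antisymm h4 h3
      exact Fin.ext this
    · rintro rfl
      intro a b hab _
      simpa using hab
  rw [hflt, sum_singleton]
  rfl

lemma sg_mul (g : Equiv.Perm (Fin (n+1))) :
    (∑ w ∈ (univ : Finset (Equiv.Perm (Fin (n+1)))), (MonoidAlgebra.single w 1 : MonoidAlgebra ℚ (Equiv.Perm (Fin (n+1)))))
      * MonoidAlgebra.single g 1
    = ∑ w ∈ (univ : Finset (Equiv.Perm (Fin (n+1)))), MonoidAlgebra.single w 1 := by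
  rw [Finset.sum_mul]
  apply Finset.sum_equiv (Equiv.mulRight g)
  · simp
  · intro u _
    rw [MonoidAlgebra.single_mul_single, one_mul]
    rfl

lemma mul_sg (g : Equiv.Perm (Fin (n+1))) :
    MonoidAlgebra.single g 1
      * (∑ w ∈ (univ : Finset (Equiv.Perm (Fin (n+1)))), (MonoidAlgebra.single w 1 : MonoidAlgebra ℚ (Equiv.Perm (Fin (n+1)))))
    = ∑ w ∈ (univ : Finset (Equiv.Perm (Fin (n+1)))), MonoidAlgebra.single w 1 := by
  rw [Finset.mul_sum]
  apply Finset.sum_equiv (Equiv.mulLeft g)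
  · simp
  · intro u _
    rw [MonoidAlgebra.single_mul_single, one_mul]
    rfl

lemma xA_zero_eq : xA (n+1) 0
    = ∑ w ∈ (univ : Finset (Equiv.Perm (Fin (n+1)))), MonoidAlgebra.single w 1 := by
  rw [xA_eq]
  congr 1
  apply Finset.filter_true_of_mem
  intro w _
  intro a b hab hb
  have h1 : (a : ℕ) < (b : ℕ) := hab
  omega

lemma comm0 : xA (n+1) 0 * xA (n+1) (n-1) = xA (n+1) (n-1) * xA (n+1) 0 := by
  have l1 : xA (n+1) 0 * xA (n+1) (n-1)
      = ∑ v ∈ univ.filter (P (n+1) (n-1)),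
          (∑ w ∈ (univ : Finset (Equiv.Perm (Fin (n+1)))), (MonoidAlgebra.single w 1 : MonoidAlgebra ℚ (Equiv.Perm (Fin (n+1))))) * MonoidAlgebra.single v 1 := by
    rw [xA_zero_eq, xA_eq (n+1) (n-1)]
    exact Finset.mul_sum _ _ _
  have l2 : xA (n+1) (n-1) * xA (n+1) 0
      = ∑ v ∈ univ.filter (P (n+1) (n-1)),
          MonoidAlgebra.single v 1 * (∑ w ∈ (univ : Finset (Equiv.Perm (Fin (n+1)))), (MonoidAlgebra.single w 1 : MonoidAlgebra ℚ (Equiv.Perm (Fin (n+1))))) := by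
    rw [xA_zero_eq, xA_eq (n+1) (n-1)]
    exact Finset.sum_mul _ _ _
  rw [l1, l2]
  exact Finset.sum_congr rfl fun v _ => by rw [sg_mul, mul_sg]

lemma listconv (m : ℕ) :
    ((List.range m).map
      (fun i => xA (n + 1) (n - 1)
        - (i : MonoidAlgebra ℚ (Equiv.Perm (Fin (n + 1)))))).prod
    = ((List.range m).map
      (fun i : ℕ => xA (n + 1) (n - 1)
        - (Nat.cast i : MonoidAlgebra ℚ (Equiv.Perm (Fin (n + 1)))))).prod := by
  congr 1
  induction (List.range m) with
  | nil => rfl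
  | cons a l ih => simp_all

lemma prod_eq (hn : 1 ≤ n) : ∀ m, m ≤ n →
    ((List.range m).map
      (fun i : ℕ => xA (n + 1) (n - 1)
        - (Nat.cast i : MonoidAlgebra ℚ (Equiv.Perm (Fin (n + 1)))))).prod
      = xA (n+1) (n - m) := by
  intro m
  induction m with
  | zero =>
    intro _
    simp only [List.range_zero, List.map_nil, List.prod_nil, Nat.sub_zero]
    exact xA_n_eq_one.symm
  | succ m IH =>
    intro hm
    rw [List.range_succ, List.map_append, List.prod_append]
    simp only [List.map_cons, List.map_nil, List.prod_cons, List.prod_nil, mul_one]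
    have hc : Commute
        (xA (n + 1) (n - 1) - (Nat.cast m : MonoidAlgebra ℚ (Equiv.Perm (Fin (n + 1)))))
        (((List.range m).map
          (fun i : ℕ => xA (n + 1) (n - 1)
            - (Nat.cast i : MonoidAlgebra ℚ (Equiv.Perm (Fin (n + 1)))))).prod) := by
      apply Commute.list_prod_right
      intro y hy
      simp only [List.mem_map, List.mem_range] at hy
      obtain ⟨i, _, rfl⟩ := hy
      exact ((Commute.refl _).sub_right (Nat.commute_cast _ _)).sub_left (Nat.cast_commute _ _)
    rw [← hc.eq, IH (by omega)]
    have hkey := mul_key (n := n) (j := n - m) (by omega)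
    have e1 : n - (n - m) = m := by omega
    have e2 : n - m - 1 = n - (m + 1) := by omega
    rw [e1, e2] at hkey
    rw [sub_mul, hkey]
    have hnm : (Nat.cast m : MonoidAlgebra ℚ (Equiv.Perm (Fin (n + 1)))) * xA (n+1) (n - m)
        = ((m : ℕ) : ℚ) • xA (n+1) (n - m) := by
      rw [← nsmul_eq_mul, ← Nat.cast_smul_eq_nsmul ℚ]
    rw [hnm]
    rw [add_sub_cancel_right]


/-- In `ℚ[S_{n+1}]`, the element `x_{n-1}` satisfies
`x_{n-1}^(falling (n+1)) = x_{n-1}^(falling n)`, i.e.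
`∏_{i=0}^{n} (x_{n-1} - i) = ∏_{i=0}^{n-1} (x_{n-1} - i)`. -/
theorem xA_fallingPow_succ_eq (n : ℕ) (hn : 1 ≤ n) :
    ((List.range (n + 1)).map
      (fun i => xA (n + 1) (n - 1)
        - (i : MonoidAlgebra ℚ (Equiv.Perm (Fin (n + 1)))))).prod =
    ((List.range n).map
      (fun i => xA (n + 1) (n - 1)
        - (i : MonoidAlgebra ℚ (Equiv.Perm (Fin (n + 1)))))).prod := by
  rw [listconv, listconv]
  have h1 := prod_eq (n := n) hn n le_rfl
  rw [Nat.sub_self] at h1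
  rw [List.range_succ, List.map_append, List.prod_append]
  simp only [List.map_cons, List.map_nil, List.prod_cons, List.prod_nil, mul_one]
  rw [h1]
  rw [mul_sub, comm0, mul_key (n := n) (j := 0) (Nat.zero_le n)]
  simp only [Nat.zero_sub, Nat.sub_zero]
  have hx : xA (n+1) 0 * (Nat.cast n : MonoidAlgebra ℚ (Equiv.Perm (Fin (n + 1))))
      = ((n : ℕ) : ℚ) • xA (n+1) 0 := by
    rw [(Nat.commute_cast (xA (n+1) 0) n).eq, ← nsmul_eq_mul, ← Nat.cast_smul_eq_nsmul ℚ]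
  rw [hx, add_sub_cancel_right]
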